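/- arXiv:1611.01100 — 2 statements merged into one kernel-verified Lean document; each statement's English description precedes it below -/
import Mathlib

section
/- Bi-Lipschitz property of a level set function along its gradient direction (relation (2.3) of the paper): Let U ⊆ ℝⁿ be open, x ∈ U, and r > 0 with the closed ball of radius r around x contained in U. Let φ : ℝⁿ → ℝ be differentiable on U with m ≤ ‖∇φ(y)‖ ≤ M for all y ∈ U (with constants 0 < m ≤ M) and with K-Lipschitz gradient on U: ‖∇φ(y) − ∇φ(z)‖ ≤ K‖y − z‖ for y, z ∈ U (K > 0). Set δ := min( m² / (2 K M²), r / M ). Then for all ε, ε̃ ∈ [−δ, δ]: (m²/2) · |ε − ε̃| ≤ |φ(x + ε ∇φ(x)) − φ(x + ε̃ ∇φ(x))| ≤ 2 M² · |ε − ε̃|. -/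
open Metric Set

/-- Bi-Lipschitz property of a level set function along its gradient direction:
if `m ≤ ‖∇φ‖ ≤ M` on `U`, the gradient is `K`-Lipschitz on `U`, and
`δ = min (m²/(2KM²)) (r/M)`, then for `ε, ε̃ ∈ [-δ, δ]` one has
`(m²/2)|ε - ε̃| ≤ |φ(x + ε∇φ(x)) - φ(x + ε̃∇φ(x))| ≤ 2M²|ε - ε̃|`. -/
theorem levelset_biLipschitz_along_gradient {n : ℕ}
    (U : Set (EuclideanSpace ℝ (Fin n))) (hU : IsOpen U)
    (x : EuclideanSpace ℝ (Fin n)) (r : ℝ) (hr : 0 < r)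
    (hball : closedBall x r ⊆ U)
    (φ : EuclideanSpace ℝ (Fin n) → ℝ)
    (hdiff : ∀ y ∈ U, DifferentiableAt ℝ φ y)
    (m M K : ℝ) (hm : 0 < m) (hmM : m ≤ M) (hK : 0 < K)
    (hgrad_lb : ∀ y ∈ U, m ≤ ‖gradient φ y‖)
    (hgrad_ub : ∀ y ∈ U, ‖gradient φ y‖ ≤ M)
    (hlip : ∀ y ∈ U, ∀ z ∈ U, ‖gradient φ y - gradient φ z‖ ≤ K * ‖y - z‖)
    (δ : ℝ) (hδ : δ = min (m ^ 2 / (2 * K * M ^ 2)) (r / M))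
    (ε ε' : ℝ) (hε : ε ∈ Icc (-δ) δ) (hε' : ε' ∈ Icc (-δ) δ) :
    m ^ 2 / 2 * |ε - ε'| ≤
        |φ (x + ε • gradient φ x) - φ (x + ε' • gradient φ x)| ∧
      |φ (x + ε • gradient φ x) - φ (x + ε' • gradient φ x)| ≤
        2 * M ^ 2 * |ε - ε'| := by
  have hM : 0 < M := lt_of_lt_of_le hm hmM
  have hδpos : 0 < δ := by
    rw [hδ]
    apply lt_min <;> positivity
  set v := gradient φ x with hv
  have hxU : x ∈ U := hball (mem_closedBall_self hr.le)
  have hnv : ‖v‖ ≤ M := hgrad_ub x hxU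
  have hnvm : m ≤ ‖v‖ := hgrad_lb x hxU
  have hδ1 : δ ≤ m ^ 2 / (2 * K * M ^ 2) := hδ ▸ min_le_left _ _
  have hδ2 : δ ≤ r / M := hδ ▸ min_le_right _ _
  have hmem : ∀ t : ℝ, |t| ≤ δ → x + t • v ∈ U := by
    intro t ht
    apply hball
    simp only [mem_closedBall, dist_eq_norm, add_sub_cancel_left]
    calc ‖t • v‖ = |t| * ‖v‖ := by rw [norm_smul, Real.norm_eq_abs]
      _ ≤ δ * M := mul_le_mul ht hnv (norm_nonneg _) hδpos.le
      _ ≤ (r / M) * M := mul_le_mul_of_nonneg_right hδ2 hM.le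
      _ = r := div_mul_cancel₀ r hM.ne'
  have hderiv : ∀ t : ℝ, |t| ≤ δ →
      HasDerivAt (fun s => φ (x + s • v))
        (inner ℝ (gradient φ (x + t • v)) v : ℝ) t := by
    intro t ht
    have hp : x + t • v ∈ U := hmem t ht
    have hcurve : HasDerivAt (fun s : ℝ => x + s • v) v t := by
      simpa using ((hasDerivAt_id t).smul_const v).const_add x
    have hgrad := (hdiff _ hp).hasGradientAt
    have := hgrad.hasFDerivAt.comp_hasDerivAt t hcurve
    simp at this ⊢; exact this
  have hbound : ∀ t : ℝ, |t| ≤ δ →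
      m ^ 2 / 2 ≤ (inner ℝ (gradient φ (x + t • v)) v : ℝ) ∧
      (inner ℝ (gradient φ (x + t • v)) v : ℝ) ≤ 2 * M ^ 2 := by
    intro t ht
    have hp : x + t • v ∈ U := hmem t ht
    have hsplit : (inner ℝ (gradient φ (x + t • v)) v : ℝ)
        = (inner ℝ v v : ℝ) + (inner ℝ (gradient φ (x + t • v) - v) v : ℝ) := by
      rw [inner_sub_left]; ring
    have hKδ : δ * (2 * K * M ^ 2) ≤ m ^ 2 :=
      (le_div_iff₀ (by positivity)).mp hδ1
    have hkey : |(inner ℝ (gradient φ (x + t • v) - v) v : ℝ)| ≤ m ^ 2 / 2 := by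
      calc |(inner ℝ (gradient φ (x + t • v) - v) v : ℝ)|
          ≤ ‖gradient φ (x + t • v) - v‖ * ‖v‖ := abs_real_inner_le_norm _ _
        _ ≤ (K * ‖(x + t • v) - x‖) * M :=
            mul_le_mul (hlip _ hp x hxU) hnv (norm_nonneg _) (by positivity)
        _ ≤ (K * (δ * M)) * M := by
            have : ‖(x + t • v) - x‖ ≤ δ * M := by
              simp only [add_sub_cancel_left]
              calc ‖t • v‖ = |t| * ‖v‖ := by rw [norm_smul, Real.norm_eq_abs]
                _ ≤ δ * M := mul_le_mul ht hnv (norm_nonneg _) hδpos.le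
            have h1 : K * ‖(x + t • v) - x‖ ≤ K * (δ * M) :=
              mul_le_mul_of_nonneg_left this hK.le
            exact mul_le_mul_of_nonneg_right h1 hM.le
        _ ≤ m ^ 2 / 2 := by nlinarith
    have hvv : (inner ℝ v v : ℝ) = ‖v‖ ^ 2 := real_inner_self_eq_norm_sq v
    have h1 : m ^ 2 ≤ ‖v‖ ^ 2 := by nlinarith [norm_nonneg v]
    have h2 : ‖v‖ ^ 2 ≤ M ^ 2 := by nlinarith [norm_nonneg v]
    have habs := abs_le.mp hkey
    constructor
    · rw [hsplit, hvv]; nlinarith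
    · rw [hsplit, hvv]; nlinarith
  have key : ∀ a b : ℝ, a ∈ Icc (-δ) δ → b ∈ Icc (-δ) δ → b ≤ a →
      m ^ 2 / 2 * (a - b) ≤ |φ (x + a • v) - φ (x + b • v)| ∧
      |φ (x + a • v) - φ (x + b • v)| ≤ 2 * M ^ 2 * (a - b) := by
    intro a b ha hb hba
    rcases eq_or_lt_of_le hba with rfl | hba
    · simp
    · have hmemI : ∀ t ∈ Icc b a, |t| ≤ δ := fun t ht =>
        abs_le.mpr ⟨le_trans hb.1 ht.1, le_trans ht.2 ha.2⟩
      obtain ⟨c, hc, hslope⟩ := exists_hasDerivAt_eq_slope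
        (fun s => φ (x + s • v)) (fun t => (inner ℝ (gradient φ (x + t • v)) v : ℝ))
        hba
        (fun t ht => (hderiv t (hmemI t ht)).continuousAt.continuousWithinAt)
        (fun t ht => hderiv t (hmemI t (Ioo_subset_Icc_self ht)))
      have hcδ : |c| ≤ δ := hmemI c (Ioo_subset_Icc_self hc)
      obtain ⟨hcl, hcu⟩ := hbound c hcδ
      have hab : 0 < a - b := sub_pos.mpr hba
      have heq : φ (x + a • v) - φ (x + b • v)
          = (inner ℝ (gradient φ (x + c • v)) v : ℝ) * (a - b) := by
        rw [hslope, div_mul_cancel₀ _ hab.ne']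
      have hpos : 0 ≤ φ (x + a • v) - φ (x + b • v) := by
        rw [heq]
        exact mul_nonneg (le_trans (by positivity) hcl) hab.le
      rw [abs_of_nonneg hpos, heq]
      exact ⟨mul_le_mul_of_nonneg_right hcl hab.le,
        mul_le_mul_of_nonneg_right hcu hab.le⟩
  rcases le_total ε' ε with h | h
  · have := key ε ε' hε hε' h
    rwa [abs_of_nonneg (sub_nonneg.mpr h)]
  · have := key ε' ε hε' hε h
    rw [abs_sub_comm ε ε', abs_sub_comm (φ (x + ε • v))]
    rwa [abs_of_nonneg (sub_nonneg.mpr h)]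
end

section
/- Existence and uniqueness of the normal displacement defining the mapping Ψ (well-definedness of d in equation (3.1) of the paper): Let U ⊆ ℝⁿ be open, x ∈ U, and r > 0 with the closed ball of radius r around x contained in U. Let φ : ℝⁿ → ℝ be differentiable on U with m ≤ ‖∇φ(y)‖ ≤ M for all y ∈ U (with constants 0 < m ≤ M) and with K-Lipschitz gradient on U (K > 0). Set δ := min( m² / (2 K M²), r / M ). Then for every target value c ∈ ℝ with |c − φ(x)| ≤ (m²/2) · δ, there exists a unique d ∈ [−δ, δ] such that φ(x + d ∇φ(x)) = c. -/
open Metric Set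

/-- Existence and uniqueness of the normal displacement defining the mapping `Ψ`:
under the same assumptions on the level set function `φ` as in the bi-Lipschitz
estimate, with `δ = min (m²/(2KM²)) (r/M)`, for every target value `c` with
`|c - φ(x)| ≤ (m²/2)δ` there exists a unique `d ∈ [-δ, δ]` such that
`φ(x + d∇φ(x)) = c`. -/
theorem exists_unique_normal_displacement {n : ℕ}
    (U : Set (EuclideanSpace ℝ (Fin n))) (hU : IsOpen U)
    (x : EuclideanSpace ℝ (Fin n)) (r : ℝ) (hr : 0 < r)
    (hball : closedBall x r ⊆ U)
    (φ : EuclideanSpace ℝ (Fin n) → ℝ)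
    (hdiff : ∀ y ∈ U, DifferentiableAt ℝ φ y)
    (m M K : ℝ) (hm : 0 < m) (hmM : m ≤ M) (hK : 0 < K)
    (hgrad_lb : ∀ y ∈ U, m ≤ ‖gradient φ y‖)
    (hgrad_ub : ∀ y ∈ U, ‖gradient φ y‖ ≤ M)
    (hlip : ∀ y ∈ U, ∀ z ∈ U, ‖gradient φ y - gradient φ z‖ ≤ K * ‖y - z‖)
    (δ : ℝ) (hδ : δ = min (m ^ 2 / (2 * K * M ^ 2)) (r / M))
    (c : ℝ) (hc : |c - φ x| ≤ m ^ 2 / 2 * δ) :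
    ∃! d : ℝ, d ∈ Icc (-δ) δ ∧ φ (x + d • gradient φ x) = c := by
  have hM : 0 < M := hm.trans_le hmM
  have hδ1 : δ ≤ m ^ 2 / (2 * K * M ^ 2) := hδ ▸ min_le_left _ _
  have hδ2 : δ ≤ r / M := hδ ▸ min_le_right _ _
  have hδpos : 0 < δ := by rw [hδ]; exact lt_min (by positivity) (by positivity)
  set G := gradient φ x with hG
  have hxU : x ∈ U := hball (mem_closedBall_self hr.le)
  have hGub : ‖G‖ ≤ M := hgrad_ub x hxU
  have hGlb : m ≤ ‖G‖ := hgrad_lb x hxU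
  set g : ℝ → ℝ := fun t => φ (x + t • G) with hg
  have hmem : ∀ d ∈ Icc (-δ) δ, x + d • G ∈ U := by
    intro d hd
    apply hball
    have h1 : |d| ≤ δ := abs_le.2 ⟨hd.1, hd.2⟩
    have h2 : ‖d • G‖ ≤ δ * M := by
      rw [norm_smul]
      exact mul_le_mul h1 hGub (norm_nonneg _) hδpos.le
    have hδM : δ * M ≤ r := by
      calc δ * M ≤ (r / M) * M := by nlinarith
        _ = r := by field_simp
    simp only [mem_closedBall, dist_eq_norm, add_sub_cancel_left]
    linarith
  have hderiv : ∀ d ∈ Icc (-δ) δ,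
      HasDerivAt g (inner ℝ (gradient φ (x + d • G)) G : ℝ) d := by
    intro d hd
    have hyU := hmem d hd
    have hFD : HasFDerivAt φ (InnerProductSpace.toDual ℝ _ (gradient φ (x + d • G)))
        (x + d • G) := (hdiff _ hyU).hasGradientAt.hasFDerivAt
    have hcurve : HasDerivAt (fun t : ℝ => x + t • G) G d := by
      simpa using ((hasDerivAt_id d).smul_const G).const_add x
    exact hFD.comp_hasDerivAt d hcurve
  have key : ∀ d ∈ Icc (-δ) δ, m ^ 2 / 2 ≤ (inner ℝ (gradient φ (x + d • G)) G : ℝ) := by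
    intro d hd
    have hyU := hmem d hd
    have h1 : |d| ≤ δ := abs_le.2 ⟨hd.1, hd.2⟩
    have hlipd : ‖gradient φ (x + d • G) - G‖ ≤ K * (δ * M) := by
      have := hlip _ hyU x hxU
      have heq : ‖x + d • G - x‖ = ‖d • G‖ := by rw [add_sub_cancel_left]
      have h2 : ‖d • G‖ ≤ δ * M := by
        rw [norm_smul]; exact mul_le_mul h1 hGub (norm_nonneg _) hδpos.le
      calc ‖gradient φ (x + d • G) - G‖ ≤ K * ‖x + d • G - x‖ := this
        _ = K * ‖d • G‖ := by rw [heq]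
        _ ≤ K * (δ * M) := by nlinarith [norm_nonneg (d • G)]
    have hsplit : (inner ℝ (gradient φ (x + d • G)) G : ℝ)
        = ‖G‖ ^ 2 + inner ℝ (gradient φ (x + d • G) - G) G := by
      rw [inner_sub_left, real_inner_self_eq_norm_sq]; ring
    have habs : |(inner ℝ (gradient φ (x + d • G) - G) G : ℝ)|
        ≤ ‖gradient φ (x + d • G) - G‖ * ‖G‖ := abs_real_inner_le_norm _ _
    have hKδ : K * (δ * M) * M ≤ m ^ 2 / 2 := by
      have : δ * (2 * K * M ^ 2) ≤ m ^ 2 := (le_div_iff₀ (by positivity)).1 hδ1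
      nlinarith
    rw [hsplit]
    have := abs_le.1 habs
    nlinarith [norm_nonneg (gradient φ (x + d • G) - G), norm_nonneg G]
  have hcont : ContinuousOn g (Icc (-δ) δ) :=
    fun d hd => ((hderiv d hd).continuousAt).continuousWithinAt
  -- strict monotonicity
  have hsm : StrictMonoOn g (Icc (-δ) δ) := by
    apply strictMonoOn_of_deriv_pos (convex_Icc _ _) hcont
    intro d hd
    rw [interior_Icc] at hd
    have hd' : d ∈ Icc (-δ) δ := Ioo_subset_Icc_self hd
    rw [(hderiv d hd').deriv]
    exact lt_of_lt_of_le (by positivity) (key d hd')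
  -- quantitative growth via auxiliary function
  have hgrow : ∀ a ∈ Icc (-δ) δ, ∀ b ∈ Icc (-δ) δ, a ≤ b →
      m ^ 2 / 2 * (b - a) ≤ g b - g a := by
    intro a ha b hb hab
    set f : ℝ → ℝ := fun t => g t - m ^ 2 / 2 * t with hf
    have hfmono : MonotoneOn f (Icc (-δ) δ) := by
      apply monotoneOn_of_deriv_nonneg (convex_Icc _ _)
      · exact hcont.sub ((continuous_const.mul continuous_id).continuousOn)
      · intro d hd
        rw [interior_Icc] at hd
        exact (((hderiv d (Ioo_subset_Icc_self hd)).sub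
          ((hasDerivAt_id d).const_mul (m ^ 2 / 2))).differentiableAt).differentiableWithinAt
      · intro d hd
        rw [interior_Icc] at hd
        have hd' : d ∈ Icc (-δ) δ := Ioo_subset_Icc_self hd
        have hD : HasDerivAt f ((inner ℝ (gradient φ (x + d • G)) G : ℝ) - m ^ 2 / 2 * 1) d :=
          (hderiv d hd').sub ((hasDerivAt_id d).const_mul (m ^ 2 / 2))
        rw [hD.deriv]
        have := key d hd'
        linarith
    have := hfmono ha hb hab
    simp only [hf] at this
    linarith
  have h0 : (0 : ℝ) ∈ Icc (-δ) δ := ⟨by linarith, hδpos.le⟩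
  have hδmem : δ ∈ Icc (-δ) δ := ⟨by linarith, le_refl _⟩
  have hnδmem : -δ ∈ Icc (-δ) δ := ⟨le_refl _, by linarith⟩
  have hg0 : g 0 = φ x := by simp [hg]
  have hupper : c ≤ g δ := by
    have := hgrow 0 h0 δ hδmem hδpos.le
    have habs := abs_le.1 hc
    rw [hg0] at this
    linarith
  have hlower : g (-δ) ≤ c := by
    have := hgrow (-δ) hnδmem 0 h0 (by linarith)
    have habs := abs_le.1 hc
    rw [hg0] at this
    linarith
  obtain ⟨d, hd, hgd⟩ := intermediate_value_Icc (by linarith : -δ ≤ δ) hcont ⟨hlower, hupper⟩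
  refine ⟨d, ⟨hd, hgd⟩, ?_⟩
  intro e ⟨he, hge⟩
  exact hsm.injOn he hd (hge.trans hgd.symm)
end
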